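/- Let f : Ω → ℝ be a continuously differentiable function on an open set Ω ⊆ ℝⁿ containing a point x̄. The following three statements are equivalent: (a) f is piecewise quadratic on some neighborhood of x̄; (b) the gradient ∇f is piecewise affine on some neighborhood of x̄; (c) f is piecewise linear-quadratic on some neighborhood of x̄. -/

import Mathlib

open Filter Topology Set

noncomputable section

/-- A polyhedron `{x : Ax ≤ b}`. -/
def IsPolyhedron {n : ℕ} (S : Set (Fin n → ℝ)) : Prop :=
  ∃ (m : ℕ) (A : Matrix (Fin m) (Fin n) ℝ) (b : Fin m → ℝ),
    S = {x | ∀ i, (∑ j, A i j * x j) ≤ b i}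

/-- The quadratic function `q(x) = ½ xᵀQx + cᵀx + α`. -/
def quadF {n : ℕ} (Q : Matrix (Fin n) (Fin n) ℝ) (c : Fin n → ℝ) (α : ℝ)
    (x : Fin n → ℝ) : ℝ :=
  (1/2) * (∑ i, ∑ j, Q i j * x i * x j) + (∑ i, c i * x i) + α

/-- `f` is piecewise quadratic on `U`: continuity and a finite family of quadratics among
whose values `f` selects. -/
def IsPQOn {n : ℕ} (f : (Fin n → ℝ) → ℝ) (U : Set (Fin n → ℝ)) : Prop :=
  ContinuousOn f U ∧ ∃ (I : ℕ) (Qm : Fin I → Matrix (Fin n) (Fin n) ℝ)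
    (c : Fin I → Fin n → ℝ) (α : Fin I → ℝ),
    ∀ x ∈ U, ∃ i, f x = quadF (Qm i) (c i) (α i) x

/-- `f` is piecewise linear-quadratic on `U`: `U` is a finite union of polyhedra on each of
which `f` agrees with a quadratic. -/
def IsPLQOn {n : ℕ} (f : (Fin n → ℝ) → ℝ) (U : Set (Fin n → ℝ)) : Prop :=
  ContinuousOn f U ∧ ∃ (I : ℕ) (P : Fin I → Set (Fin n → ℝ))
    (Qm : Fin I → Matrix (Fin n) (Fin n) ℝ) (c : Fin I → Fin n → ℝ) (α : Fin I → ℝ),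
    (∀ i, IsPolyhedron (P i)) ∧ U = ⋃ i, P i ∧
    ∀ i, ∀ x ∈ P i, f x = quadF (Qm i) (c i) (α i) x

/-- A vector function `G` is piecewise affine on `U`: `U` is a finite union of polyhedra on
each of which `G` agrees with an affine map. -/
def IsPAVecOn {n m : ℕ} (G : (Fin n → ℝ) → (Fin m → ℝ)) (U : Set (Fin n → ℝ)) : Prop :=
  ContinuousOn G U ∧ ∃ (I : ℕ) (P : Fin I → Set (Fin n → ℝ))
    (B : Fin I → Matrix (Fin m) (Fin n) ℝ) (d : Fin I → Fin m → ℝ),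
    (∀ i, IsPolyhedron (P i)) ∧ U = ⋃ i, P i ∧
    ∀ i, ∀ x ∈ P i, G x = fun k => (∑ j, B i k j * x j) + d i k



lemma isPolyhedron_of_flex {n : ℕ} {S : Set (Fin n → ℝ)}
    (h : ∃ (ι : Type) (_ : Fintype ι) (a : ι → Fin n → ℝ) (β : ι → ℝ),
      S = {x | ∀ i, (∑ j, a i j * x j) ≤ β i}) : IsPolyhedron S := by
  obtain ⟨ι, hι, a, β, rfl⟩ := h
  refine ⟨Fintype.card ι, fun i j => a ((Fintype.equivFin ι).symm i) j,
    fun i => β ((Fintype.equivFin ι).symm i), ?_⟩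
  ext x
  constructor
  · intro hx i; exact hx _
  · intro hx i
    have := hx (Fintype.equivFin ι i)
    simpa using this

lemma IsPolyhedron.flex {n : ℕ} {S : Set (Fin n → ℝ)} (h : IsPolyhedron S) :
    ∃ (ι : Type) (_ : Fintype ι) (a : ι → Fin n → ℝ) (β : ι → ℝ),
      S = {x | ∀ i, (∑ j, a i j * x j) ≤ β i} := by
  obtain ⟨m, A, b, rfl⟩ := h
  exact ⟨Fin m, inferInstance, A, b, rfl⟩

lemma isPolyhedron_iInter {n : ℕ} {ι : Type} [Fintype ι] {P : ι → Set (Fin n → ℝ)}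
    (h : ∀ t, IsPolyhedron (P t)) : IsPolyhedron (⋂ t, P t) := by
  choose κ hκ a β hP using fun t => (h t).flex
  letI : ∀ t, Fintype (κ t) := hκ
  refine isPolyhedron_of_flex ⟨Σ t, κ t, inferInstance, fun p => a p.1 p.2,
    fun p => β p.1 p.2, ?_⟩
  ext x
  simp only [mem_iInter, mem_setOf_eq, Sigma.forall]
  constructor
  · intro hx t i
    have := hx t; rw [hP t] at this; exact this i
  · intro hx t; rw [hP t]; intro i; exact hx t i

lemma IsPolyhedron.inter {n : ℕ} {S T : Set (Fin n → ℝ)}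
    (hS : IsPolyhedron S) (hT : IsPolyhedron T) : IsPolyhedron (S ∩ T) := by
  have : S ∩ T = ⋂ b : Bool, (if b then S else T) := by
    ext x; simp [Bool.forall_bool, and_comm]
  rw [this]
  exact isPolyhedron_iInter (fun b => by cases b <;> simpa)

lemma isPolyhedron_halfspace {n : ℕ} (a : Fin n → ℝ) (β : ℝ) :
    IsPolyhedron {x : Fin n → ℝ | (∑ j, a j * x j) ≤ β} := by
  refine isPolyhedron_of_flex ⟨PUnit, inferInstance, fun _ => a, fun _ => β, ?_⟩
  ext x; simp

lemma IsPolyhedron.convex {n : ℕ} {S : Set (Fin n → ℝ)} (h : IsPolyhedron S) :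
    Convex ℝ S := by
  obtain ⟨m, A, b, rfl⟩ := h
  intro x hx y hy s t hs ht hst
  intro i
  have hx' := hx i
  have hy' := hy i
  have : (∑ j, A i j * (s • x + t • y) j) = s * (∑ j, A i j * x j) + t * (∑ j, A i j * y j) := by
    rw [Finset.mul_sum, Finset.mul_sum, ← Finset.sum_add_distrib]
    refine Finset.sum_congr rfl fun j _ => ?_
    simp [Pi.add_apply, Pi.smul_apply, smul_eq_mul]; ring
  rw [this]
  calc s * (∑ j, A i j * x j) + t * (∑ j, A i j * y j) ≤ s * b i + t * b i := by
        gcongr <;> assumption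
    _ = b i := by rw [← add_mul, hst, one_mul]

lemma IsPolyhedron.isClosed {n : ℕ} {S : Set (Fin n → ℝ)} (h : IsPolyhedron S) :
    IsClosed S := by
  obtain ⟨m, A, b, rfl⟩ := h
  have : {x : Fin n → ℝ | ∀ i, (∑ j, A i j * x j) ≤ b i} =
      ⋂ i, {x : Fin n → ℝ | (∑ j, A i j * x j) ≤ b i} := by ext x; simp
  rw [this]
  refine isClosed_iInter fun i => isClosed_le ?_ continuous_const
  exact continuous_finset_sum _ fun j _ => continuous_const.mul (continuous_apply j)

lemma isPolyhedron_closedBall {n : ℕ} (c : Fin n → ℝ) {ε : ℝ} (hε : 0 ≤ ε) :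
    IsPolyhedron (Metric.closedBall c ε) := by
  refine isPolyhedron_of_flex ⟨Fin n × Bool, inferInstance,
    fun p j => if p.2 then (if j = p.1 then (1:ℝ) else 0) else (if j = p.1 then (-1:ℝ) else 0),
    fun p => if p.2 then c p.1 + ε else ε - c p.1, ?_⟩
  ext x
  simp only [Metric.mem_closedBall, mem_setOf_eq]
  rw [dist_pi_le_iff hε]
  constructor
  · rintro h ⟨i, b⟩
    have := h i
    rw [Real.dist_eq, abs_le] at this
    cases b <;> simp [Finset.sum_ite_eq'] <;> linarith [this.1, this.2]
  · intro h i
    have h1 := h ⟨i, true⟩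
    have h2 := h ⟨i, false⟩
    simp [Finset.sum_ite_eq'] at h1 h2
    rw [Real.dist_eq, abs_le]
    constructor <;> linarith



abbrev projR {n : ℕ} (i : Fin n) : (Fin n → ℝ) →L[ℝ] ℝ :=
  ContinuousLinearMap.proj i

lemma quadF_hasFDerivAt {n : ℕ} (Q : Matrix (Fin n) (Fin n) ℝ) (c : Fin n → ℝ) (α : ℝ)
    (x : Fin n → ℝ) :
    HasFDerivAt (quadF Q c α)
      ((1/2 : ℝ) • (∑ i, ∑ j, ((Q i j * x i) • projR j + (x j) • ((Q i j) • projR i)))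
        + ∑ i, (c i) • projR (n := n) i) x := by
  have hproj : ∀ i : Fin n, HasFDerivAt (fun x : Fin n → ℝ => x i) (projR i) x :=
    fun i => (projR i).hasFDerivAt
  have hquad : HasFDerivAt (fun x : Fin n → ℝ => ∑ i, ∑ j, Q i j * x i * x j)
      (∑ i, ∑ j, ((Q i j * x i) • projR j + (x j) • ((Q i j) • projR i))) x := by
    refine HasFDerivAt.fun_sum fun i _ => ?_
    refine HasFDerivAt.fun_sum fun j _ => ?_
    exact ((hproj i).const_mul (Q i j)).mul (hproj j)
  have hlin : HasFDerivAt (fun x : Fin n → ℝ => ∑ i, c i * x i)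
      (∑ i, (c i) • projR (n := n) i) x :=
    HasFDerivAt.fun_sum fun i _ => (hproj i).const_mul (c i)
  exact ((hquad.const_mul (1/2 : ℝ)).add hlin).add_const α

lemma quadF_fderiv_single {n : ℕ} (Q : Matrix (Fin n) (Fin n) ℝ) (c : Fin n → ℝ) (α : ℝ)
    (x : Fin n → ℝ) (k : Fin n) :
    fderiv ℝ (quadF Q c α) x (Pi.single k 1)
      = (∑ j, ((1/2) * (Q k j + Q j k)) * x j) + c k := by
  rw [(quadF_hasFDerivAt Q c α x).fderiv]
  simp only [ContinuousLinearMap.add_apply, ContinuousLinearMap.smul_apply,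
    ContinuousLinearMap.coe_sum', Finset.sum_apply, ContinuousLinearMap.proj_apply,
    smul_eq_mul]
  have hs : ∀ j : Fin n, (Pi.single k (1:ℝ) : Fin n → ℝ) j = if j = k then 1 else 0 := by
    intro j; simp [Pi.single_apply]
  have h1 : ∀ i : Fin n, (∑ j, ((Q i j * x i) * (Pi.single k (1:ℝ) : Fin n → ℝ) j
        + x j * (Q i j * (Pi.single k (1:ℝ) : Fin n → ℝ) i)))
      = Q i k * x i + (if i = k then ∑ j, x j * Q i j else 0) := by
    intro i
    rw [Finset.sum_add_distrib]
    congr 1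
    · simp [hs, mul_ite, Finset.sum_ite_eq']
    · by_cases h : i = k
      · simp [h, hs]
      · simp [hs, h]
  rw [Finset.sum_congr rfl fun i _ => h1 i]
  rw [Finset.sum_add_distrib]
  simp only [Finset.sum_ite_eq', Finset.mem_univ, if_true]
  have h2 : ∀ i : Fin n, c i * (Pi.single k (1:ℝ) : Fin n → ℝ) i = if i = k then c i else 0 := by
    intro i; by_cases h : i = k <;> simp [hs, h]
  rw [Finset.sum_congr rfl fun i _ => h2 i]
  simp only [Finset.sum_ite_eq', Finset.mem_univ, if_true]
  have h3 : ∀ j : Fin n, (1/2)*(Q k j + Q j k)*x j = 1/2*(Q j k * x j) + 1/2*(x j * Q k j) :=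
    fun j => by ring
  rw [Finset.sum_congr rfl fun j _ => h3 j, Finset.sum_add_distrib,
    ← Finset.mul_sum, ← Finset.mul_sum, ← mul_add]



lemma key_alg {n : ℕ} (B : Matrix (Fin n) (Fin n) ℝ) (d x0 x : Fin n → ℝ) (v : ℝ) :
    v + (∑ k, (x k - x0 k) * ((∑ j, B k j * x0 j) + d k))
      + (∑ k, (x k - x0 k) * (∑ j, B k j * (x j - x0 j))) / 2
    = quadF B (fun k => d k + (1/2) * (∑ j, B k j * x0 j) - (1/2) * (∑ j, B j k * x0 j))
        (v - (∑ k, x0 k * ((∑ j, B k j * x0 j) + d k))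
          + (1/2) * (∑ k, x0 k * (∑ j, B k j * x0 j))) x := by
  classical
  set s1 : Fin n → ℝ := fun k => ∑ j, B k j * x j with hs1
  set s2 : Fin n → ℝ := fun k => ∑ j, B k j * x0 j with hs2
  set s3 : Fin n → ℝ := fun k => ∑ j, B j k * x0 j with hs3
  -- inner sum rewrite
  have hinner : ∀ k, (∑ j, B k j * (x j - x0 j)) = s1 k - s2 k := by
    intro k
    rw [hs1, hs2]
    simp only
    rw [← Finset.sum_sub_distrib]
    exact Finset.sum_congr rfl fun j _ => by ring
  have hquad : (∑ i, ∑ j, B i j * x i * x j) = ∑ i, x i * s1 i := by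
    refine Finset.sum_congr rfl fun i _ => ?_
    rw [hs1]; simp only [Finset.mul_sum]
    exact Finset.sum_congr rfl fun j _ => by ring
  have haux : (∑ k, s3 k * x k) = ∑ k, x0 k * s1 k := by
    have l1 : (∑ k, s3 k * x k) = ∑ k, ∑ j, B j k * x0 j * x k := by
      refine Finset.sum_congr rfl fun k _ => ?_
      rw [hs3]; simp only [Finset.sum_mul]
    have l2 : (∑ k, x0 k * s1 k) = ∑ j, ∑ k, B j k * x0 j * x k := by
      refine Finset.sum_congr rfl fun j _ => ?_
      rw [hs1]; simp only [Finset.mul_sum]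
      exact Finset.sum_congr rfl fun k _ => by ring
    rw [l1, l2, Finset.sum_comm]
  have hc : (∑ k, (d k + (1/2) * s2 k - (1/2) * s3 k) * x k)
      = (∑ k, (d k + (1/2) * s2 k) * x k) - (1/2) * (∑ k, x0 k * s1 k) := by
    rw [← haux]
    rw [Finset.mul_sum, ← Finset.sum_sub_distrib]
    exact Finset.sum_congr rfl fun k _ => by ring
  have main : (∑ k, (x k - x0 k) * (s2 k + d k))
        + (∑ k, (x k - x0 k) * (s1 k - s2 k)) / 2
      = (1/2) * (∑ k, x k * s1 k) + ((∑ k, (d k + (1/2) * s2 k) * x k)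
          - (1/2) * (∑ k, x0 k * s1 k))
        + (- (∑ k, x0 k * (s2 k + d k)) + (1/2) * (∑ k, x0 k * s2 k)) := by
    have e : ∀ k : Fin n, (x k - x0 k) * (s2 k + d k) + (x k - x0 k) * (s1 k - s2 k) / 2
        = (1/2) * (x k * s1 k) + ((d k + (1/2) * s2 k) * x k - (1/2) * (x0 k * s1 k))
          + (- (x0 k * (s2 k + d k)) + (1/2) * (x0 k * s2 k)) := fun k => by ring
    calc (∑ k, (x k - x0 k) * (s2 k + d k)) + (∑ k, (x k - x0 k) * (s1 k - s2 k)) / 2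
        = ∑ k, ((x k - x0 k) * (s2 k + d k) + (x k - x0 k) * (s1 k - s2 k) / 2) := by
          rw [Finset.sum_add_distrib, Finset.sum_div]
      _ = ∑ k, ((1/2) * (x k * s1 k) + ((d k + (1/2) * s2 k) * x k - (1/2) * (x0 k * s1 k))
            + (- (x0 k * (s2 k + d k)) + (1/2) * (x0 k * s2 k))) :=
          Finset.sum_congr rfl fun k _ => e k
      _ = _ := by
          rw [Finset.sum_add_distrib, Finset.sum_add_distrib, Finset.sum_sub_distrib,
            Finset.sum_add_distrib, ← Finset.mul_sum, ← Finset.mul_sum, ← Finset.mul_sum,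
            ← Finset.sum_neg_distrib]
  unfold quadF
  rw [hquad, hc]
  have hsum : ∀ k, (∑ j, (x k - x0 j) * 0) = 0 := fun k => by simp
  rw [Finset.sum_congr rfl fun k (_ : k ∈ Finset.univ) => congrArg (fun z => (x k - x0 k) * z) (hinner k)]
  linarith [main]

lemma clm_eval {n : ℕ} (L : (Fin n → ℝ) →L[ℝ] ℝ) (v : Fin n → ℝ) :
    L v = ∑ k, v k * L (Pi.single k 1) := by
  conv_lhs => rw [← Finset.univ_sum_single v]
  rw [map_sum]
  refine Finset.sum_congr rfl fun k _ => ?_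
  have h : Pi.single k (v k) = v k • (Pi.single k 1 : Fin n → ℝ) := by
    funext j; by_cases h : j = k <;> simp [Pi.single_apply, h]
  rw [h, map_smul, smul_eq_mul]

lemma quad_of_affine_grad {n : ℕ} {Ω : Set (Fin n → ℝ)} (hΩ : IsOpen Ω)
    {f : (Fin n → ℝ) → ℝ} (hf : ContDiffOn ℝ 1 f Ω)
    {P : Set (Fin n → ℝ)} (hPc : Convex ℝ P) (hPΩ : P ⊆ Ω)
    (B : Matrix (Fin n) (Fin n) ℝ) (d : Fin n → ℝ)
    (hgrad : ∀ x ∈ P, ∀ k, fderiv ℝ f x (Pi.single k 1) = (∑ j, B k j * x j) + d k) :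
    ∃ Q c α, ∀ x ∈ P, f x = quadF Q c α x := by
  by_cases hP : P.Nonempty
  swap
  · exact ⟨0, 0, 0, fun x hx => absurd ⟨x, hx⟩ hP⟩
  obtain ⟨x0, hx0⟩ := hP
  refine ⟨B, fun k => d k + (1/2) * (∑ j, B k j * x0 j) - (1/2) * (∑ j, B j k * x0 j),
    f x0 - (∑ k, x0 k * ((∑ j, B k j * x0 j) + d k))
      + (1/2) * (∑ k, x0 k * (∑ j, B k j * x0 j)), ?_⟩
  intro x hx
  have hdiff : ∀ y ∈ Ω, HasFDerivAt f (fderiv ℝ f y) y := fun y hy =>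
    ((hf.differentiableOn one_ne_zero).differentiableAt (hΩ.mem_nhds hy)).hasFDerivAt
  set γ : ℝ → (Fin n → ℝ) := fun t => fun j => x0 j + t * (x j - x0 j) with hγ
  have hγmem : ∀ t ∈ Icc (0:ℝ) 1, γ t ∈ P := by
    intro t ht
    have := hPc hx0 hx (by linarith [ht.1, ht.2] : (0:ℝ) ≤ 1 - t) ht.1 (by ring)
    convert this using 1
    funext j
    simp only [Pi.add_apply, Pi.smul_apply, smul_eq_mul]
    ring
  have hγder : ∀ t : ℝ, HasDerivAt γ (fun j => x j - x0 j) t := by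
    intro t
    rw [hasDerivAt_pi]
    intro j
    exact (hasDerivAt_mul_const (x j - x0 j)).const_add (x0 j)
  set a : ℝ := ∑ k, (x k - x0 k) * ((∑ j, B k j * x0 j) + d k) with ha
  set b : ℝ := ∑ k, (x k - x0 k) * (∑ j, B k j * (x j - x0 j)) with hb
  have hφ : ∀ t ∈ uIcc (0:ℝ) 1, HasDerivAt (fun t => f (γ t)) (a + t * b) t := by
    intro t ht
    rw [uIcc_of_le zero_le_one] at ht
    have hmem := hγmem t ht
    have h1 : HasDerivAt (fun t => f (γ t)) (fderiv ℝ f (γ t) (fun j => x j - x0 j)) t :=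
      (hdiff (γ t) (hPΩ hmem)).comp_hasDerivAt t (hγder t)
    convert h1 using 1
    rw [clm_eval]
    have h2 : ∀ k, fderiv ℝ f (γ t) (Pi.single k 1) = (∑ j, B k j * (γ t) j) + d k :=
      fun k => hgrad (γ t) hmem k
    rw [Finset.sum_congr rfl fun k (_ : k ∈ Finset.univ) => congrArg (fun z => (x k - x0 k) * z) (h2 k)]
    have h3 : ∀ k : Fin n, (∑ j, B k j * (γ t) j)
        = (∑ j, B k j * x0 j) + t * (∑ j, B k j * (x j - x0 j)) := by
      intro k
      rw [Finset.mul_sum, ← Finset.sum_add_distrib]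
      refine Finset.sum_congr rfl fun j _ => ?_
      simp only [hγ]
      ring
    rw [Finset.sum_congr rfl fun k (_ : k ∈ Finset.univ) =>
      congrArg (fun z => (x k - x0 k) * (z + d k)) (h3 k)]
    rw [ha, hb, Finset.mul_sum, ← Finset.sum_add_distrib]
    refine Finset.sum_congr rfl fun k _ => by ring
  have hint : IntervalIntegrable (fun t => a + t * b) MeasureTheory.volume 0 1 :=
    (continuous_const.add (continuous_id.mul continuous_const)).intervalIntegrable 0 1
  have hFTC := intervalIntegral.integral_eq_sub_of_hasDerivAt hφ hint
  have hγ1 : γ 1 = x := by funext j; simp [hγ]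
  have hγ0 : γ 0 = x0 := by funext j; simp [hγ]
  rw [hγ1, hγ0] at hFTC
  have hval : (∫ t in (0:ℝ)..1, (a + t * b)) = a + b / 2 := by
    have hi2 : IntervalIntegrable (fun t : ℝ => t * b) MeasureTheory.volume 0 1 := by
      apply Continuous.intervalIntegrable; continuity
    have : (∫ t in (0:ℝ)..1, (a + t * b)) = (∫ t in (0:ℝ)..1, a) + ∫ t in (0:ℝ)..1, t * b :=
      intervalIntegral.integral_add (intervalIntegrable_const) hi2
    rw [this, intervalIntegral.integral_mul_const, integral_id, intervalIntegral.integral_const]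
    norm_num
    ring
  rw [hval] at hFTC
  have : f x = f x0 + a + b / 2 := by linarith
  rw [this, ha, hb]
  exact key_alg B d x0 x (f x0)


lemma quadF_continuous {n : ℕ} (Q : Matrix (Fin n) (Fin n) ℝ) (c : Fin n → ℝ) (α : ℝ) :
    Continuous (quadF Q c α) := by
  unfold quadF
  refine ((continuous_const.mul ?_).add ?_).add continuous_const
  · exact continuous_finset_sum _ fun i _ => continuous_finset_sum _ fun j _ =>
      (continuous_const.mul (continuous_apply i)).mul (continuous_apply j)
  · exact continuous_finset_sum _ fun i _ => continuous_const.mul (continuous_apply i)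

lemma aff_continuous {n : ℕ} (a : Fin n → ℝ) (β : ℝ) :
    Continuous (fun x : Fin n → ℝ => (∑ j, a j * x j) + β) :=
  (continuous_finset_sum _ fun j _ => continuous_const.mul (continuous_apply j)).add
    continuous_const

lemma selection_stage {n : ℕ} {Ω : Set (Fin n → ℝ)} (hΩ : IsOpen Ω)
    {f : (Fin n → ℝ) → ℝ} (hf : ContDiffOn ℝ 1 f Ω)
    {xbar : Fin n → ℝ} {U : Set (Fin n → ℝ)} (hU : U ∈ 𝓝 xbar) (hUΩ : U ⊆ Ω) {I : ℕ}
    (Qm : Fin I → Matrix (Fin n) (Fin n) ℝ) (c : Fin I → Fin n → ℝ) (α : Fin I → ℝ)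
    (hsel : ∀ x ∈ U, ∃ i, f x = quadF (Qm i) (c i) (α i) x) :
    ∃ ε : ℝ, 0 < ε ∧ Metric.closedBall xbar ε ⊆ Ω ∧
      ∀ x ∈ Metric.closedBall xbar ε, ∃ i, ∀ k,
        fderiv ℝ f x (Pi.single k 1)
          = (∑ j, ((1/2) * (Qm i k j + Qm i j k)) * x j) + c i k := by
  obtain ⟨ε0, hε0, hball⟩ := Metric.mem_nhds_iff.mp hU
  have hKU : Metric.closedBall xbar (ε0/2) ⊆ U := by
    refine subset_trans ?_ hball
    intro y hy
    exact lt_of_le_of_lt (Metric.mem_closedBall.mp hy) (by linarith)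
  have hKΩ : Metric.closedBall xbar (ε0/2) ⊆ Ω := subset_trans hKU hUΩ
  set K := Metric.closedBall xbar (ε0/2) with hK
  set S : Fin I → Set (Fin n → ℝ) :=
    fun i => {x | x ∈ K ∧ f x = quadF (Qm i) (c i) (α i) x} with hS
  have hSclosed : ∀ i, IsClosed (S i) := by
    intro i
    have : S i = K ∩ (fun x => f x - quadF (Qm i) (c i) (α i) x) ⁻¹' {0} := by
      ext x
      simp only [hS, mem_setOf_eq, mem_inter_iff, mem_preimage, mem_singleton_iff, sub_eq_zero]
    rw [this]
    exact ContinuousOn.preimage_isClosed_of_isClosed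
      ((hf.continuousOn.mono hKΩ).sub ((quadF_continuous _ _ _).continuousOn))
      Metric.isClosed_closedBall isClosed_singleton
  have hScover : ∀ x ∈ K, ∃ i, x ∈ S i := by
    intro x hx
    obtain ⟨i, hi⟩ := hsel x (hKU hx)
    exact ⟨i, hx, hi⟩
  -- Baire
  set C : Option (Fin I) → Set (Fin n → ℝ) :=
    fun o => Option.elim o (Metric.ball xbar (ε0/2))ᶜ S with hC
  have hCclosed : ∀ o, IsClosed (C o) := by
    rintro (_ | i)
    · exact Metric.isOpen_ball.isClosed_compl
    · exact hSclosed i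
  have hCunion : (⋃ o, C o) = univ := by
    ext x
    simp only [mem_iUnion, mem_univ, iff_true]
    by_cases hx : x ∈ Metric.ball xbar (ε0/2)
    · obtain ⟨i, hi⟩ := hScover x (Metric.ball_subset_closedBall hx)
      exact ⟨some i, hi⟩
    · exact ⟨none, hx⟩
  have hdense : Dense (⋃ o, interior (C o)) :=
    dense_iUnion_interior_of_closed hCclosed hCunion
  have hclo : ∀ x ∈ Metric.closedBall xbar (ε0/4), ∃ i, x ∈ closure (interior (S i)) := by
    intro x hx
    by_contra hcon
    push_neg at hcon
    set O := (⋃ i, closure (interior (S i)))ᶜ ∩ Metric.ball x (ε0/8) with hO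
    have hOopen : IsOpen O :=
      ((isClosed_iUnion_of_finite fun i => isClosed_closure).isOpen_compl).inter
        Metric.isOpen_ball
    have hxO : x ∈ O := by
      refine ⟨?_, Metric.mem_ball_self (by linarith)⟩
      simp only [mem_compl_iff, mem_iUnion, not_exists]
      exact hcon
    obtain ⟨y, hyD, hyO⟩ := hdense.exists_mem_open hOopen ⟨x, hxO⟩
    obtain ⟨o, hyo⟩ : ∃ o, y ∈ interior (C o) := by
      rcases mem_iUnion.mp hyD with ⟨o, ho⟩
      exact ⟨o, ho⟩
    match o with
    | none =>
      have h1 : y ∈ (Metric.ball xbar (ε0/2))ᶜ := interior_subset hyo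
      have h2 : y ∈ Metric.ball x (ε0/8) := hyO.2
      refine h1 ?_
      have hd1 : dist y x < ε0/8 := Metric.mem_ball.mp h2
      have hd2 : dist x xbar ≤ ε0/4 := Metric.mem_closedBall.mp hx
      have : dist y xbar < ε0/2 := by
        calc dist y xbar ≤ dist y x + dist x xbar := dist_triangle _ _ _
          _ < ε0/2 := by linarith
      exact Metric.mem_ball.mpr this
    | some i =>
      exact hyO.1 (mem_iUnion.mpr ⟨i, subset_closure hyo⟩)
  -- gradient equals affine map on closure of interior
  have hgradcont : ContinuousOn (fderiv ℝ f) Ω :=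
    hf.continuousOn_fderiv_of_isOpen hΩ le_rfl
  have hSU : ∀ i, S i ⊆ Ω := fun i x hx => hKΩ hx.1
  have hgrad : ∀ i, ∀ x ∈ closure (interior (S i)), ∀ k,
      fderiv ℝ f x (Pi.single k 1)
        = (∑ j, ((1/2) * (Qm i k j + Qm i j k)) * x j) + c i k := by
    intro i x hx k
    have hxS : x ∈ S i := (hSclosed i).closure_subset
      (closure_mono interior_subset hx)
    have hxΩ : x ∈ Ω := hSU i hxS
    set g : (Fin n → ℝ) → ℝ := fun y =>
      fderiv ℝ f y (Pi.single k 1) - ((∑ j, ((1/2) * (Qm i k j + Qm i j k)) * y j) + c i k)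
      with hg
    have hgcont : ContinuousOn g Ω := by
      refine ContinuousOn.sub ?_ ((aff_continuous _ _).continuousOn)
      exact hgradcont.clm_apply continuousOn_const
    have hgzero : ∀ y ∈ interior (S i), g y = 0 := by
      intro y hy
      have hySnhds : S i ∈ 𝓝 y := mem_interior_iff_mem_nhds.mp hy
      have heq : f =ᶠ[𝓝 y] quadF (Qm i) (c i) (α i) := by
        filter_upwards [hySnhds] with z hz
        exact hz.2
      have : fderiv ℝ f y = fderiv ℝ (quadF (Qm i) (c i) (α i)) y := heq.fderiv_eq
      rw [hg]
      simp only
      rw [this, quadF_fderiv_single]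
      ring
    have hne : (𝓝[interior (S i)] x).NeBot := mem_closure_iff_nhdsWithin_neBot.mp hx
    have t1 : Tendsto g (𝓝[interior (S i)] x) (𝓝 (g x)) :=
      ((hgcont x hxΩ).mono (fun y hy => hSU i (interior_subset hy))).tendsto
    have t2 : Tendsto g (𝓝[interior (S i)] x) (𝓝 0) := by
      refine Tendsto.congr' ?_ tendsto_const_nhds
      filter_upwards [self_mem_nhdsWithin] with y hy
      exact (hgzero y hy).symm
    have : g x = 0 := tendsto_nhds_unique t1 t2
    rw [hg] at this
    simp only at this
    linarith [this]
  refine ⟨ε0/4, by linarith, ?_, ?_⟩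
  · intro y hy
    refine hKΩ ?_
    have : dist y xbar ≤ ε0/4 := Metric.mem_closedBall.mp hy
    exact Metric.mem_closedBall.mpr (by linarith)
  · intro x hx
    obtain ⟨i, hi⟩ := hclo x hx
    exact ⟨i, hgrad i x hi⟩


lemma aff_combo {n : ℕ} (c : Fin n → ℝ) (β : ℝ) (a b : ℝ) (hab : a + b = 1)
    (x y : Fin n → ℝ) :
    (∑ j, c j * (a • x + b • y) j) + β
      = a * ((∑ j, c j * x j) + β) + b * ((∑ j, c j * y j) + β) := by
  have h1 : ∀ j : Fin n, c j * (a • x + b • y) j = a * (c j * x j) + b * (c j * y j) := by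
    intro j
    simp only [Pi.add_apply, Pi.smul_apply, smul_eq_mul]
    ring
  rw [Finset.sum_congr rfl fun j (_ : j ∈ Finset.univ) => h1 j, Finset.sum_add_distrib,
    ← Finset.mul_sum, ← Finset.mul_sum]
  linear_combination (-β) * hab

section PASel

variable {n I : ℕ} {K : Set (Fin n → ℝ)}
  (M : Fin I → Matrix (Fin n) (Fin n) ℝ) (v : Fin I → Fin n → ℝ)

/-- the affine candidate functions, componentwise -/
def Lf (i : Fin I) (k : Fin n) (x : Fin n → ℝ) : ℝ := (∑ j, M i k j * x j) + v i k

lemma lf_combo (i : Fin I) (k : Fin n) {a b : ℝ} (hab : a + b = 1) (x y : Fin n → ℝ) :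
    Lf M v i k (a • x + b • y) = a * Lf M v i k x + b * Lf M v i k y :=
  aff_combo _ _ a b hab x y

lemma lf_continuous (i : Fin I) (k : Fin n) : Continuous (Lf M v i k) :=
  aff_continuous _ _

lemma pa_selection (hKpoly : IsPolyhedron K)
    {G : (Fin n → ℝ) → Fin n → ℝ} (hGcont : ContinuousOn G K)
    (hsel : ∀ x ∈ K, ∃ i, ∀ k, G x k = Lf M v i k x) :
    ∃ (I' : ℕ) (P : Fin I' → Set (Fin n → ℝ)) (B : Fin I' → Matrix (Fin n) (Fin n) ℝ)
      (d : Fin I' → Fin n → ℝ), (∀ a, IsPolyhedron (P a)) ∧ K = ⋃ a, P a ∧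
      ∀ a, ∀ x ∈ P a, G x = fun k => (∑ j, B a k j * x j) + d a k := by
  classical
  set R : (Fin I → Fin I → Fin n → Bool) → Set (Fin n → ℝ) := fun σ =>
    {x ∈ K | ∀ i j k, if σ i j k then Lf M v i k x ≤ Lf M v j k x
      else Lf M v j k x ≤ Lf M v i k x} with hR
  have hhalf : ∀ (i j : Fin I) (k : Fin n),
      IsPolyhedron {x : Fin n → ℝ | Lf M v i k x ≤ Lf M v j k x} := by
    intro i j k
    have : {x : Fin n → ℝ | Lf M v i k x ≤ Lf M v j k x}
        = {x : Fin n → ℝ | (∑ t, (M i k t - M j k t) * x t) ≤ v j k - v i k} := by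
      ext x
      simp only [mem_setOf_eq, Lf]
      have : (∑ t, (M i k t - M j k t) * x t) = (∑ t, M i k t * x t) - ∑ t, M j k t * x t := by
        rw [← Finset.sum_sub_distrib]
        exact Finset.sum_congr rfl fun t _ => by ring
      rw [this]
      constructor <;> intro <;> linarith
    rw [this]
    exact isPolyhedron_halfspace _ _
  have hRpoly : ∀ σ, IsPolyhedron (R σ) := by
    intro σ
    have : R σ = K ∩ ⋂ (p : Fin I × Fin I × Fin n),
        (if σ p.1 p.2.1 p.2.2 then {x : Fin n → ℝ | Lf M v p.1 p.2.2 x ≤ Lf M v p.2.1 p.2.2 x}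
         else {x : Fin n → ℝ | Lf M v p.2.1 p.2.2 x ≤ Lf M v p.1 p.2.2 x}) := by
      ext x
      simp only [hR, mem_setOf_eq, mem_inter_iff, mem_iInter, Prod.forall]
      constructor
      · rintro ⟨hxK, h2⟩
        refine ⟨hxK, fun i j k => ?_⟩
        have := h2 i j k
        by_cases hσ : σ i j k <;> simp [hσ] at this ⊢ <;> exact this
      · rintro ⟨hxK, h2⟩
        refine ⟨hxK, fun i j k => ?_⟩
        have := h2 i j k
        by_cases hσ : σ i j k <;> simp [hσ] at this ⊢ <;> exact this
    rw [this]
    refine hKpoly.inter (isPolyhedron_iInter fun p => ?_)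
    by_cases hσ : σ p.1 p.2.1 p.2.2 <;> simp [hσ] <;> exact hhalf _ _ _
  have hRK : ∀ σ, R σ ⊆ K := fun σ x hx => hx.1
  have hRcover : K = ⋃ σ, R σ := by
    ext x
    constructor
    · intro hx
      refine mem_iUnion.mpr ⟨fun i j k => decide (Lf M v i k x ≤ Lf M v j k x), hx, ?_⟩
      intro i j k
      by_cases h : Lf M v i k x ≤ Lf M v j k x
      · simp [h]
      · simp [h]
        exact le_of_not_ge h
    · intro hx
      obtain ⟨σ, hσ⟩ := mem_iUnion.mp hx
      exact hσ.1
  -- main per-piece claim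
  have hmain : ∀ σ, ∃ (Bm : Matrix (Fin n) (Fin n) ℝ) (dv : Fin n → ℝ),
      ∀ x ∈ R σ, ∀ k, G x k = (∑ j, Bm k j * x j) + dv k := by
    intro σ
    by_cases hne : (R σ).Nonempty
    swap
    · exact ⟨0, 0, fun x hx => absurd ⟨x, hx⟩ hne⟩
    have hRconv : Convex ℝ (R σ) := (hRpoly σ).convex
    have horder : ∀ (i j : Fin I) (k : Fin n), (∀ x ∈ R σ, Lf M v i k x ≤ Lf M v j k x)
        ∨ (∀ x ∈ R σ, Lf M v j k x ≤ Lf M v i k x) := by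
      intro i j k
      by_cases hσ : σ i j k
      · left; intro x hx; have := hx.2 i j k; simpa [hσ] using this
      · right; intro x hx; have := hx.2 i j k; simpa [hσ] using this
    set Ndg : Fin I → Fin I → Fin n → Prop :=
      fun i j k => ∃ y ∈ R σ, Lf M v i k y ≠ Lf M v j k y with hNdg
    set W : Set (Fin n → ℝ) :=
      {x ∈ R σ | ∀ i j k, Ndg i j k → Lf M v i k x ≠ Lf M v j k x} with hW
    -- key strictness transfer on combos
    have hstrict : ∀ (i j : Fin I) (k : Fin n), Ndg i j k → ∀ {a b : ℝ} (ha : 0 ≤ a)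
        (hb : 0 ≤ b) (hab : a + b = 1) (x y : Fin n → ℝ), x ∈ R σ → y ∈ R σ →
        Lf M v i k x ≠ Lf M v j k x → Lf M v i k y ≠ Lf M v j k y →
        Lf M v i k (a • x + b • y) ≠ Lf M v j k (a • x + b • y) := by
      intro i j k _ a b ha hb hab x y hx hy hxne hyne
      rw [lf_combo M v i k hab, lf_combo M v j k hab]
      rcases horder i j k with hor | hor
      · have h1 : Lf M v i k x < Lf M v j k x := lt_of_le_of_ne (hor x hx) hxne
        have h2 : Lf M v i k y < Lf M v j k y := lt_of_le_of_ne (hor y hy) hyne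
        have : a * Lf M v i k x + b * Lf M v i k y < a * Lf M v j k x + b * Lf M v j k y := by
          rcases eq_or_lt_of_le ha with rfl | ha'
          · simp at hab; subst hab; simpa using h2
          · have := mul_lt_mul_of_pos_left h1 ha'
            nlinarith
        exact ne_of_lt this
      · have h1 : Lf M v j k x < Lf M v i k x := lt_of_le_of_ne (hor x hx) (Ne.symm hxne)
        have h2 : Lf M v j k y < Lf M v i k y := lt_of_le_of_ne (hor y hy) (Ne.symm hyne)
        have : a * Lf M v j k x + b * Lf M v j k y < a * Lf M v i k x + b * Lf M v i k y := by
          rcases eq_or_lt_of_le ha with rfl | ha'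
          · simp at hab; subst hab; simpa using h2
          · have := mul_lt_mul_of_pos_left h1 ha'
            nlinarith
        exact (ne_of_lt this).symm
    have hWconv : Convex ℝ W := by
      intro x hx y hy a b ha hb hab
      refine ⟨hRconv hx.1 hy.1 ha hb hab, ?_⟩
      intro i j k hndg
      exact hstrict i j k hndg ha hb hab x y hx.1 hy.1 (hx.2 i j k hndg) (hy.2 i j k hndg)
    -- density of W in R σ
    have hWdense : ∀ x ∈ R σ, ∀ δ : ℝ, 0 < δ → ∃ w ∈ W, dist w x < δ := by
      have claim : ∀ (F : Finset (Fin I × Fin I × Fin n)), ∀ x ∈ R σ, ∀ δ : ℝ, 0 < δ →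
          ∃ w ∈ R σ, dist w x < δ ∧ ∀ p ∈ F, Ndg p.1 p.2.1 p.2.2 →
            Lf M v p.1 p.2.2 w ≠ Lf M v p.2.1 p.2.2 w := by
        intro F
        induction F using Finset.induction_on with
        | empty =>
          intro x hx δ hδ
          exact ⟨x, hx, by simpa using hδ, by simp⟩
        | @insert p F hpF ih =>
          intro x hx δ hδ
          obtain ⟨w, hwR, hwd, hwF⟩ := ih x hx (δ/2) (by linarith)
          by_cases hndg : Ndg p.1 p.2.1 p.2.2
          swap
          · refine ⟨w, hwR, by linarith, ?_⟩
            intro q hq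
            rcases Finset.mem_insert.mp hq with rfl | hq'
            · exact fun h => absurd h hndg
            · exact hwF q hq'
          obtain ⟨y, hyR, hyne⟩ := hndg
          set wt : ℝ → (Fin n → ℝ) := fun t => (1 - t) • w + t • y with hwt
          have hwt0 : wt 0 = w := by simp [hwt]
          have hwtcont : Continuous wt := by
            refine Continuous.add ?_ ?_
            · exact (continuous_const.sub continuous_id).smul continuous_const
            · exact continuous_id.smul continuous_const
          have ev1 : ∀ᶠ t in 𝓝[>] (0:ℝ), t ∈ Ioo (0:ℝ) 1 :=
            Ioo_mem_nhdsGT_of_mem ⟨le_refl 0, zero_lt_one⟩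
          have ev2 : ∀ᶠ t in 𝓝[>] (0:ℝ), dist (wt t) x < δ := by
            have hc : ContinuousAt (fun t => dist (wt t) x) 0 :=
              ((hwtcont.dist continuous_const).continuousAt)
            have h0 : dist (wt 0) x < δ := by rw [hwt0]; linarith
            have := hc.eventually_lt_const h0  -- check lemma name
            exact this.filter_mono nhdsWithin_le_nhds
          have ev3 : ∀ᶠ t in 𝓝[>] (0:ℝ), ∀ q ∈ F, Ndg q.1 q.2.1 q.2.2 →
              Lf M v q.1 q.2.2 (wt t) ≠ Lf M v q.2.1 q.2.2 (wt t) := by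
            rw [Filter.eventually_all_finset]
            intro q hq
            by_cases hq' : Ndg q.1 q.2.1 q.2.2
            swap
            · exact Filter.Eventually.of_forall fun t h => absurd h hq'
            have hcq : ContinuousAt
                (fun t => Lf M v q.1 q.2.2 (wt t) - Lf M v q.2.1 q.2.2 (wt t)) 0 :=
              (((lf_continuous M v _ _).comp hwtcont).sub
                ((lf_continuous M v _ _).comp hwtcont)).continuousAt
            have h0 : Lf M v q.1 q.2.2 (wt 0) - Lf M v q.2.1 q.2.2 (wt 0) ≠ 0 := by
              rw [hwt0]; exact sub_ne_zero_of_ne (hwF q hq hq')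
            have := hcq.eventually_ne h0
            refine (this.filter_mono nhdsWithin_le_nhds).mono ?_
            intro t ht _
            exact fun h => ht (by rw [h]; ring)
          have ev4 : ∀ᶠ t in 𝓝[>] (0:ℝ),
              Lf M v p.1 p.2.2 (wt t) ≠ Lf M v p.2.1 p.2.2 (wt t) := by
            by_cases hDw : Lf M v p.1 p.2.2 w = Lf M v p.2.1 p.2.2 w
            · refine ev1.mono ?_
              intro t ht
              have hcombo1 : Lf M v p.1 p.2.2 (wt t)
                  = (1-t) * Lf M v p.1 p.2.2 w + t * Lf M v p.1 p.2.2 y :=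
                lf_combo M v _ _ (by ring) w y
              have hcombo2 : Lf M v p.2.1 p.2.2 (wt t)
                  = (1-t) * Lf M v p.2.1 p.2.2 w + t * Lf M v p.2.1 p.2.2 y :=
                lf_combo M v _ _ (by ring) w y
              rw [hcombo1, hcombo2, hDw]
              intro h
              have : t * Lf M v p.1 p.2.2 y = t * Lf M v p.2.1 p.2.2 y := by linarith
              have := mul_left_cancel₀ (ne_of_gt ht.1) this
              exact hyne this
            · have hcq : ContinuousAt
                  (fun t => Lf M v p.1 p.2.2 (wt t) - Lf M v p.2.1 p.2.2 (wt t)) 0 :=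
                (((lf_continuous M v _ _).comp hwtcont).sub
                  ((lf_continuous M v _ _).comp hwtcont)).continuousAt
              have h0 : Lf M v p.1 p.2.2 (wt 0) - Lf M v p.2.1 p.2.2 (wt 0) ≠ 0 := by
                rw [hwt0]; exact sub_ne_zero_of_ne hDw
              refine ((hcq.eventually_ne h0).filter_mono nhdsWithin_le_nhds).mono ?_
              intro t ht
              exact fun h => ht (by rw [h]; ring)
          obtain ⟨t, ht1, ht2, ht3, ht4⟩ := (ev1.and (ev2.and (ev3.and ev4))).exists
          refine ⟨wt t, ?_, ht2, ?_⟩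
          · exact hRconv hwR hyR (by linarith [ht1.2]) (le_of_lt ht1.1) (by ring)
          · intro q hq
            rcases Finset.mem_insert.mp hq with rfl | hq'
            · exact fun _ => ht4
            · exact ht3 q hq'
      intro x hx δ hδ
      obtain ⟨w, hwR, hwd, hwall⟩ := claim Finset.univ x hx δ hδ
      refine ⟨w, ⟨hwR, ?_⟩, hwd⟩
      intro i j k hndg
      exact hwall (i, j, k) (Finset.mem_univ _) hndg
    -- the sets where G agrees with a given affine map
    set T : Fin I → Set (Fin n → ℝ) := fun i => {x ∈ R σ | ∀ k, G x k = Lf M v i k x} with hT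
    have hTclosed : ∀ i, IsClosed (T i) := by
      intro i
      have hTi : T i = R σ ∩ ⋂ k, (R σ ∩ (fun x => G x k - Lf M v i k x) ⁻¹' {0}) := by
        ext x
        constructor
        · rintro ⟨hxR, h2⟩
          exact ⟨hxR, mem_iInter.mpr fun k => ⟨hxR, by simp [h2 k]⟩⟩
        · rintro ⟨hxR, h2⟩
          refine ⟨hxR, fun k => ?_⟩
          have := (mem_iInter.mp h2 k).2
          simpa [sub_eq_zero] using this
      rw [hTi]
      refine ((hRpoly σ).isClosed).inter (isClosed_iInter fun k => ?_)
      refine ContinuousOn.preimage_isClosed_of_isClosed ?_ (hRpoly σ).isClosed isClosed_singleton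
      exact ((continuous_apply k).comp_continuousOn (hGcont.mono (hRK σ))).sub
        ((lf_continuous M v i k).continuousOn)
    obtain ⟨xh, hxh⟩ := hne
    obtain ⟨w0, hw0W, _⟩ := hWdense xh hxh 1 one_pos
    obtain ⟨i0, hi0⟩ := hsel w0 (hRK σ hw0W.1)
    set Equ : Fin I → Prop := fun j => ∀ x ∈ R σ, ∀ k, Lf M v j k x = Lf M v i0 k x with hEqu
    set Bset : Set (Fin n → ℝ) := ⋃ j, (if Equ j then (∅ : Set (Fin n → ℝ)) else T j) with hBset
    have hBclosed : IsClosed Bset := by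
      refine isClosed_iUnion_of_finite fun j => ?_
      by_cases h : Equ j
      · simp only [if_pos h]; exact isClosed_empty
      · simp only [if_neg h]; exact hTclosed j
    have hdisj : ∀ x ∈ W, x ∈ T i0 → x ∈ Bset → False := by
      intro x hxW hxA hxB
      obtain ⟨j, hj⟩ := mem_iUnion.mp hxB
      by_cases h : Equ j
      · rw [if_pos h] at hj; exact hj
      · rw [if_neg h] at hj
        have h' : ∃ y ∈ R σ, ∃ k, Lf M v j k y ≠ Lf M v i0 k y := by
          simp only [hEqu] at h
          push_neg at h
          exact h
        obtain ⟨y, hyR, k, hk⟩ := h'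
        have hndg : Ndg j i0 k := ⟨y, hyR, hk⟩
        exact (hxW.2 j i0 k hndg) (by rw [← hj.2 k]; exact hxA.2 k)
    have hw0A : w0 ∈ T i0 := ⟨hw0W.1, hi0⟩
    have hWsub : W ⊆ T i0 ∪ Bset := by
      intro x hxW
      obtain ⟨j, hj⟩ := hsel x (hRK σ hxW.1)
      by_cases h : Equ j
      · exact Or.inl ⟨hxW.1, fun k => by rw [hj k]; exact h x hxW.1 k⟩
      · exact Or.inr (mem_iUnion.mpr ⟨j, by rw [if_neg h]; exact ⟨hxW.1, hj⟩⟩)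
    have hWA : W ⊆ T i0 := by
      by_contra hcon
      rw [not_subset] at hcon
      obtain ⟨z, hzW, hzA⟩ := hcon
      have hpre : IsPreconnected W := hWconv.isPreconnected
      have hsub : W ⊆ (T i0)ᶜ ∪ Bsetᶜ := by
        intro x hxW'
        by_cases hA : x ∈ T i0
        · exact Or.inr fun hB => hdisj x hxW' hA hB
        · exact Or.inl hA
      have hne1 : (W ∩ (T i0)ᶜ).Nonempty := ⟨z, hzW, hzA⟩
      have hne2 : (W ∩ Bsetᶜ).Nonempty := ⟨w0, hw0W, fun hB => hdisj w0 hw0W hw0A hB⟩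
      obtain ⟨u, huW, huA, huB⟩ :=
        hpre (T i0)ᶜ Bsetᶜ (hTclosed i0).isOpen_compl hBclosed.isOpen_compl hsub hne1 hne2
      rcases hWsub huW with h | h
      · exact huA h
      · exact huB h
    refine ⟨M i0, v i0, ?_⟩
    intro x hxR k
    have hseq : ∀ m : ℕ, ∃ w ∈ W, dist w x < 1/(m+1) :=
      fun m => hWdense x hxR _ (by positivity)
    choose w hwW hwd using hseq
    have htend : Tendsto w atTop (𝓝 x) := by
      rw [tendsto_iff_dist_tendsto_zero]
      refine squeeze_zero (fun m => dist_nonneg) (fun m => le_of_lt (hwd m)) ?_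
      exact tendsto_one_div_add_atTop_nhds_zero_nat
    have htendW : Tendsto w atTop (𝓝[R σ] x) :=
      tendsto_nhdsWithin_of_tendsto_nhds_of_eventually_within _ htend
        (Filter.Eventually.of_forall fun m => (hwW m).1)
    have hGk : ContinuousWithinAt (fun z => G z k) (R σ) x :=
      ((continuous_apply k).comp_continuousOn (hGcont.mono (hRK σ))) x hxR
    have t1 : Tendsto (fun m => G (w m) k) atTop (𝓝 (G x k)) := hGk.tendsto.comp htendW
    have t2 : Tendsto (fun m => Lf M v i0 k (w m)) atTop (𝓝 (Lf M v i0 k x)) :=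
      ((lf_continuous M v i0 k).continuousAt).tendsto.comp htend
    have heq : ∀ m, G (w m) k = Lf M v i0 k (w m) := fun m => ((hWA (hwW m)).2) k
    have hfin : G x k = Lf M v i0 k x :=
      tendsto_nhds_unique (Filter.Tendsto.congr heq t1) t2
    simpa [Lf] using hfin
  -- assemble
  choose Bm dv hBd using hmain
  refine ⟨Fintype.card (Fin I → Fin I → Fin n → Bool),
    fun a => R ((Fintype.equivFin (Fin I → Fin I → Fin n → Bool)).symm a),
    fun a => Bm ((Fintype.equivFin (Fin I → Fin I → Fin n → Bool)).symm a),
    fun a => dv ((Fintype.equivFin (Fin I → Fin I → Fin n → Bool)).symm a),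
    fun a => hRpoly _, ?_, ?_⟩
  · rw [hRcover]
    exact ((Fintype.equivFin (Fin I → Fin I → Fin n → Bool)).symm.surjective.iUnion_comp
      (fun σ => R σ)).symm
  · intro a x hx
    funext k
    exact hBd _ x hx k
end PASel


/-- For a `C¹` function `f` on an open set `Ω ∋ xbar`, the following are
equivalent: (a) `f` is piecewise quadratic near `xbar`; (b) `∇f` is piecewise affine near
`xbar`; (c) `f` is piecewise linear-quadratic near `xbar`. -/
theorem stmt9 {n : ℕ} (Ω : Set (Fin n → ℝ)) (hΩ : IsOpen Ω)
    (f : (Fin n → ℝ) → ℝ) (hf : ContDiffOn ℝ 1 f Ω)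
    (xbar : Fin n → ℝ) (hxbar : xbar ∈ Ω) :
    ((∃ U ∈ 𝓝 xbar, U ⊆ Ω ∧ IsPQOn f U) ↔
     (∃ U ∈ 𝓝 xbar, U ⊆ Ω ∧
        IsPAVecOn (fun x k => fderiv ℝ f x (Pi.single k 1)) U)) ∧
    ((∃ U ∈ 𝓝 xbar, U ⊆ Ω ∧
        IsPAVecOn (fun x k => fderiv ℝ f x (Pi.single k 1)) U) ↔
     (∃ U ∈ 𝓝 xbar, U ⊆ Ω ∧ IsPLQOn f U)) := by
  have lemCA : (∃ U ∈ 𝓝 xbar, U ⊆ Ω ∧ IsPLQOn f U) →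
      (∃ U ∈ 𝓝 xbar, U ⊆ Ω ∧ IsPQOn f U) := by
    rintro ⟨U, hU, hUΩ, hcont, I, P, Qm, c, α, hpoly, hunion, hq⟩
    refine ⟨U, hU, hUΩ, hcont, I, Qm, c, α, fun x hx => ?_⟩
    rw [hunion] at hx
    obtain ⟨s, ⟨i, rfl⟩, hxs⟩ := hx
    exact ⟨i, hq i x hxs⟩
  have lemBC : (∃ U ∈ 𝓝 xbar, U ⊆ Ω ∧
        IsPAVecOn (fun x k => fderiv ℝ f x (Pi.single k 1)) U) →
      (∃ U ∈ 𝓝 xbar, U ⊆ Ω ∧ IsPLQOn f U) := by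
    rintro ⟨U, hU, hUΩ, _, I, P, B, d, hpoly, hunion, haff⟩
    have hPU : ∀ i, P i ⊆ U := by
      intro i x hx; rw [hunion]; exact mem_iUnion.mpr ⟨i, hx⟩
    have hquad : ∀ i, ∃ Q c α, ∀ x ∈ P i, f x = quadF Q c α x := by
      intro i
      refine quad_of_affine_grad hΩ hf (hpoly i).convex
        (fun x hx => hUΩ (hPU i hx)) (B i) (d i) ?_
      intro x hx k
      exact congrFun (haff i x hx) k
    choose Qm cv αv hq using hquad
    exact ⟨U, hU, hUΩ, hf.continuousOn.mono hUΩ, I, P, Qm, cv, αv, hpoly, hunion, hq⟩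
  have lemAB : (∃ U ∈ 𝓝 xbar, U ⊆ Ω ∧ IsPQOn f U) →
      (∃ U ∈ 𝓝 xbar, U ⊆ Ω ∧
        IsPAVecOn (fun x k => fderiv ℝ f x (Pi.single k 1)) U) := by
    rintro ⟨U, hU, hUΩ, _, I, Qm, c, α, hsel⟩
    obtain ⟨ε, hε, hKΩ, hgrad⟩ := selection_stage hΩ hf hU hUΩ Qm c α hsel
    have hKpoly : IsPolyhedron (Metric.closedBall xbar ε) :=
      isPolyhedron_closedBall xbar (le_of_lt hε)
    have hGcont : ContinuousOn (fun x k => fderiv ℝ f x (Pi.single k 1))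
        (Metric.closedBall xbar ε) := by
      refine continuousOn_pi.mpr fun k => ?_
      exact ((hf.continuousOn_fderiv_of_isOpen hΩ le_rfl).mono hKΩ).clm_apply continuousOn_const
    set M : Fin I → Matrix (Fin n) (Fin n) ℝ :=
      fun i => fun k j => (1/2) * (Qm i k j + Qm i j k) with hM
    have hsel' : ∀ x ∈ Metric.closedBall xbar ε, ∃ i, ∀ k,
        (fun x k => fderiv ℝ f x (Pi.single k 1)) x k = Lf M c i k x := by
      intro x hx
      obtain ⟨i, hi⟩ := hgrad x hx
      exact ⟨i, fun k => by simpa [Lf, hM] using hi k⟩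
    obtain ⟨I', P, B, d, hp, hcover, haff⟩ := pa_selection M c hKpoly hGcont hsel'
    exact ⟨Metric.closedBall xbar ε, Metric.closedBall_mem_nhds xbar hε, hKΩ,
      hGcont, I', P, B, d, hp, hcover, haff⟩
  exact ⟨⟨lemAB, fun hb => lemCA (lemBC hb)⟩, ⟨lemBC, fun hc => lemAB (lemCA hc)⟩⟩
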